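/- Let G=(V,E) be a finite directed graph with initial vertex v_init ∈ V, and let M_G be the MDP constructed from (G, v_init) as in the Hamiltonian-path reduction. Then for every ε with 0 ≤ ε < 1/2^{|V|+1}: G has a Hamiltonian path starting at v_init (a path visiting every vertex exactly once) if and only if there exists a memoryless deterministic scheduler σ of M_G with |Pr^σ_{s₀}(◇{s_a}) − Pr^σ_{s₀}(◇{s_b})| ≤ ε. -/

import Mathlib

open scoped BigOperators Classical
open Filter

/-- A finite history: an initial state together with a list of (action, next-state) steps. -/
abbrev Hist (S A : Type*) : Type _ := S × List (A × S)

/-- The last state of a history. -/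
def Hist.last {S A : Type*} (π : Hist S A) : S :=
  (π.2.getLast?).elim π.1 Prod.snd

/-- A Markov decision process with finite state space `S` and finite action space `A`:
`P s a s'` is the transition probability, each state has at least one enabled action
(an action whose outgoing probabilities sum to `1`), and the outgoing probabilities
of a non-enabled action sum to `0`. -/
structure MDP (S A : Type*) [Fintype S] [Fintype A] where
  P : S → A → S → ℝ
  nonneg : ∀ s a s', 0 ≤ P s a s'
  le_one : ∀ s a s', P s a s' ≤ 1
  sum_cases : ∀ s a, (∑ s', P s a s') = 1 ∨ (∑ s', P s a s') = 0
  exists_enabled : ∀ s, ∃ a, (∑ s', P s a s') = 1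

namespace MDP

variable {S A : Type*} [Fintype S] [Fintype A]

/-- Action `a` is enabled in state `s`. -/
def enabled (M : MDP S A) (s : S) (a : A) : Prop := (∑ s', M.P s a s') = 1

/-- A state is absorbing if every enabled action loops on it with probability 1. -/
def Absorbing (M : MDP S A) (s : S) : Prop := ∀ a, M.enabled s a → M.P s a s = 1

end MDP

/-- A (history-dependent, randomized) scheduler for `M`: it assigns to every finite
history a probability distribution over the actions enabled at its last state. -/
structure Scheduler {S A : Type*} [Fintype S] [Fintype A] (M : MDP S A) where
  choice : Hist S A → A → ℝ
  nonneg : ∀ π a, 0 ≤ choice π a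
  sum_one : ∀ π, (∑ a, choice π a) = 1
  supp : ∀ π a, ¬ M.enabled (Hist.last π) a → choice π a = 0

namespace Scheduler

variable {S A : Type*} [Fintype S] [Fintype A] {M : MDP S A}

/-- A scheduler is memoryless if its choice only depends on the last state of the history. -/
def Memoryless (σ : Scheduler M) : Prop :=
  ∀ π π' : Hist S A, Hist.last π = Hist.last π' → σ.choice π = σ.choice π'

/-- A scheduler is deterministic if all its choice probabilities are 0 or 1. -/
def Deterministic (σ : Scheduler M) : Prop :=
  ∀ π a, σ.choice π a = 0 ∨ σ.choice π a = 1

/-- Memoryless deterministic (MD) schedulers. -/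
def MD (σ : Scheduler M) : Prop := σ.Memoryless ∧ σ.Deterministic

end Scheduler

/-- Probability of reaching the target set `T` within `n` steps, starting from history `π`,
under scheduler `σ`. -/
noncomputable def reachN {S A : Type*} [Fintype S] [Fintype A] (M : MDP S A)
    (σ : Scheduler M) (T : Set S) : ℕ → Hist S A → ℝ
  | 0, π => if Hist.last π ∈ T then 1 else 0
  | n + 1, π =>
      if Hist.last π ∈ T then 1
      else ∑ a, σ.choice π a * ∑ s', M.P (Hist.last π) a s' *
        reachN M σ T n (π.1, π.2 ++ [(a, s')])

/-- `Pr M σ s T` is the probability of eventually reaching `T` from state `s` under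
scheduler `σ`: the supremum of the step-bounded reachability probabilities. -/
noncomputable def Pr {S A : Type*} [Fintype S] [Fintype A] (M : MDP S A)
    (σ : Scheduler M) (s : S) (T : Set S) : ℝ :=
  ⨆ n : ℕ, reachN M σ T n (s, [])

/-- States of the Hamiltonian-path reduction MDP: the vertices `V`, the chain states
`s₀, s₁, …, s_{|V|−1}` (encoded as `Fin (card V)`), and the three extra states
`s_⊥, s_a, s_b` (encoded as `Fin 3`: `0 = s_⊥`, `1 = s_a`, `2 = s_b`). -/
abbrev HSt (V : Type*) [Fintype V] : Type _ := V ⊕ (Fin (Fintype.card V) ⊕ Fin 3)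

/-- Actions of the Hamiltonian-path reduction MDP: `none` is `τ` and `some (v, v')`
is the action associated with the edge `(v, v')`. -/
abbrev HAct (V : Type*) : Type _ := Option (V × V)

/-- The initial state `s₀` (the first chain state). -/
def hs0 (V : Type*) [Fintype V] [Nonempty V] : HSt V :=
  Sum.inr (Sum.inl ⟨0, Fintype.card_pos⟩)

/-- The absorbing state `s_⊥`. -/
def hsBot (V : Type*) [Fintype V] : HSt V := Sum.inr (Sum.inr 0)

/-- The absorbing state `s_a`. -/
def hsA (V : Type*) [Fintype V] : HSt V := Sum.inr (Sum.inr 1)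

/-- The absorbing state `s_b`. -/
def hsB (V : Type*) [Fintype V] : HSt V := Sum.inr (Sum.inr 2)

/-- The transition function of the Hamiltonian-path reduction MDP for a directed graph
`(V, E)` with initial vertex `vinit`:
`P(s₀,τ,vinit) = P(s₀,τ,s₁) = 1/2`; `P(sᵢ,τ,s_{i+1}) = P(sᵢ,τ,s_⊥) = 1/2` for
`1 ≤ i ≤ |V|−2`; `P(s_{|V|−1},τ,s_b) = P(s_{|V|−1},τ,s_⊥) = 1/2`; for `(v,v') ∈ E`,
`P(v,(v,v'),v') = P(v,(v,v'),s_⊥) = 1/2`; `P(v,τ,s_a) = 1`; `s_⊥, s_a, s_b` absorbing. -/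
noncomputable def hamP {V : Type*} [Fintype V] [DecidableEq V]
    (E : Set (V × V)) (vinit : V) : HSt V → HAct V → HSt V → ℝ := fun x act y =>
  match x, act with
  | Sum.inl v, none => if y = hsA V then 1 else 0
  | Sum.inl v, some (u, u') =>
      if u = v ∧ (u, u') ∈ E then
        (if y = Sum.inl u' then (1 : ℝ) / 2 else 0) +
          (if y = hsBot V then (1 : ℝ) / 2 else 0)
      else 0
  | Sum.inr (Sum.inl i), none =>
      (if y = (if (i : ℕ) = 0 then Sum.inl vinit else hsBot V) then (1 : ℝ) / 2 else 0) +
        (if h : (i : ℕ) + 1 < Fintype.card V then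
            (if y = Sum.inr (Sum.inl ⟨(i : ℕ) + 1, h⟩) then (1 : ℝ) / 2 else 0)
          else (if y = hsB V then (1 : ℝ) / 2 else 0))
  | Sum.inr (Sum.inl _), some _ => 0
  | Sum.inr (Sum.inr e), none => if y = Sum.inr (Sum.inr e) then 1 else 0
  | Sum.inr (Sum.inr _), some _ => 0

/-- `l` is a Hamiltonian path of the graph `(V, E)` starting at `vinit`: it lists every
vertex exactly once, starts at `vinit`, and follows edges of `E`. -/
def IsHamPath {V : Type*} [Fintype V] (E : Set (V × V)) (vinit : V) (l : List V) : Prop :=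
  l.Nodup ∧ l.length = Fintype.card V ∧ l.head? = some vinit ∧
    l.Chain' (fun u u' => (u, u') ∈ E)

section Aux

variable {S A : Type*} [Fintype S] [Fintype A]

@[simp] lemma Hist.last_nil (s : S) : Hist.last ((s, []) : Hist S A) = s := rfl

@[simp] lemma Hist.last_snoc (π : Hist S A) (a : A) (s' : S) :
    Hist.last ((π.1, π.2 ++ [(a, s')]) : Hist S A) = s' := by
  simp [Hist.last]

lemma reachN_memoryless (M : MDP S A) (σ : Scheduler M) (hmem : σ.Memoryless)
    (T : Set S) : ∀ (n : ℕ) (π : Hist S A),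
    reachN M σ T n π = reachN M σ T n (Hist.last π, []) := by
  intro n
  induction n with
  | zero => intro π; rw [reachN, reachN, Hist.last_nil]
  | succ n ih =>
    intro π
    rw [reachN, reachN]
    simp only [Hist.last_nil]
    by_cases hT : Hist.last π ∈ T
    · simp [hT]
    · simp only [hT, if_false]
      refine Finset.sum_congr rfl fun a _ => ?_
      rw [hmem π (Hist.last π, ([] : List (A × S))) (by simp)]
      congr 1
      refine Finset.sum_congr rfl fun s' _ => ?_
      congr 1
      rw [ih (π.1, π.2 ++ [(a, s')]), ih ((Hist.last π, ([] : List (A × S))).1, [] ++ [(a, s')])]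
      simp [Hist.last]

lemma reachN_nonneg (M : MDP S A) (σ : Scheduler M) (T : Set S) :
    ∀ (n : ℕ) (π : Hist S A), 0 ≤ reachN M σ T n π := by
  intro n
  induction n with
  | zero => intro π; rw [reachN]; positivity
  | succ n ih =>
    intro π
    rw [reachN]
    split
    · norm_num
    · refine Finset.sum_nonneg fun a _ => mul_nonneg (σ.nonneg _ _) ?_
      exact Finset.sum_nonneg fun s' _ => mul_nonneg (M.nonneg _ _ _) (ih _)

/-- the `val` recurrence for a memoryless scheduler -/
lemma val_succ (M : MDP S A) (σ : Scheduler M) (hmem : σ.Memoryless)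
    (T : Set S) (n : ℕ) (s : S) :
    reachN M σ T (n+1) (s, []) =
      if s ∈ T then 1 else
        ∑ a, σ.choice (s, []) a * ∑ s', M.P s a s' * reachN M σ T n (s', []) := by
  rw [reachN]
  rw [Hist.last_nil]
  split
  · rfl
  · refine Finset.sum_congr rfl fun a _ => ?_
    congr 1
    refine Finset.sum_congr rfl fun s' _ => ?_
    congr 1
    rw [reachN_memoryless M σ hmem T n (_, [] ++ [(a, s')])]
    simp [Hist.last]

lemma iSup_eq_of_forall_le_of_eq {f : ℕ → ℝ} {B : ℝ} (h1 : ∀ n, f n ≤ B)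
    {n₀ : ℕ} (h2 : f n₀ = B) : (⨆ n, f n) = B := by
  refine le_antisymm (ciSup_le h1) ?_
  rw [← h2]
  exact le_ciSup ⟨B, by rintro x ⟨n, rfl⟩; exact h1 n⟩ n₀

end Aux
section Aux2

variable {S A : Type*} [Fintype S] [Fintype A] [Nonempty A] {M : MDP S A}

lemma exists_choice_one (σ : Scheduler M) (hdet : σ.Deterministic) (s : S) :
    ∃ a, σ.choice (s, []) a = 1 := by
  by_contra h
  push_neg at h
  have h0 : ∀ a, σ.choice (s, ([] : List (A × S))) a = 0 := by
    intro a
    rcases hdet (s, []) a with h' | h'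
    · exact h'
    · exact absurd h' (h a)
  have := σ.sum_one (s, ([] : List (A × S)))
  rw [Finset.sum_congr rfl fun a _ => h0 a] at this
  simp at this

/-- the action chosen by a deterministic scheduler at state `s` -/
noncomputable def chosen (σ : Scheduler M) (s : S) : A :=
  Classical.epsilon (fun a => σ.choice (s, []) a = 1)

lemma chosen_spec (σ : Scheduler M) (hdet : σ.Deterministic) (s : S) :
    σ.choice (s, []) (chosen σ s) = 1 :=
  Classical.epsilon_spec (exists_choice_one σ hdet s)

lemma choice_eq_zero_of_ne (σ : Scheduler M) (hdet : σ.Deterministic) {s : S} {a : A}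
    (h : a ≠ chosen σ s) : σ.choice (s, []) a = 0 := by
  rcases hdet (s, []) a with h' | h'
  · exact h'
  · exfalso
    have h1 := chosen_spec σ hdet s
    have h2 : ∑ b, σ.choice (s, ([] : List (A × S))) b = 1 := σ.sum_one _
    have h3 : ({a, chosen σ s} : Finset A) ⊆ Finset.univ := Finset.subset_univ _
    have h4 : ∑ b ∈ ({a, chosen σ s} : Finset A), σ.choice (s, []) b ≤
        ∑ b, σ.choice (s, []) b :=
      Finset.sum_le_sum_of_subset_of_nonneg h3 (fun b _ _ => σ.nonneg _ b)
    rw [Finset.sum_pair h, h', h1, h2] at h4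
    linarith

lemma chosen_eq_of_choice_one (σ : Scheduler M) (hdet : σ.Deterministic) {s : S} {a : A}
    (h : σ.choice (s, []) a = 1) : chosen σ s = a := by
  by_contra hne
  have := choice_eq_zero_of_ne σ hdet (Ne.symm hne)
  rw [h] at this
  norm_num at this

lemma sum_choice_mul (σ : Scheduler M) (hdet : σ.Deterministic) (s : S) (X : A → ℝ) :
    ∑ a, σ.choice (s, []) a * X a = X (chosen σ s) := by
  rw [Finset.sum_eq_single (chosen σ s)]
  · rw [chosen_spec σ hdet, one_mul]
  · intro b _ hb
    rw [choice_eq_zero_of_ne σ hdet hb, zero_mul]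
  · intro h; exact absurd (Finset.mem_univ _) h

lemma chosen_enabled (σ : Scheduler M) (hdet : σ.Deterministic) (s : S) :
    M.enabled s (chosen σ s) := by
  by_contra h
  have := σ.supp (s, ([] : List (A × S))) (chosen σ s) (by simpa using h)
  rw [chosen_spec σ hdet] at this
  norm_num at this

end Aux2

section IterOpt

variable {α : Type*}

/-- iterate a partial function -/
def iterOpt (f : α → Option α) : ℕ → α → Option α
  | 0, v => some v
  | n + 1, v => (iterOpt f n v).bind f

lemma iterOpt_add (f : α → Option α) (m n : ℕ) (v : α) :
    iterOpt f (m + n) v = (iterOpt f m v).bind (iterOpt f n) := by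
  induction n with
  | zero =>
    show iterOpt f m v = (iterOpt f m v).bind (iterOpt f 0)
    cases iterOpt f m v <;> rfl
  | succ n ih =>
    show iterOpt f (m + n + 1) v = _
    rw [iterOpt, ih]
    cases iterOpt f m v <;> simp [iterOpt]

lemma iterOpt_succ_left (f : α → Option α) (n : ℕ) (v : α) :
    iterOpt f (n + 1) v = (f v).bind (iterOpt f n) := by
  have := iterOpt_add f 1 n v
  rw [Nat.add_comm 1 n] at this
  rw [this]
  simp [iterOpt]

lemma iterOpt_none_mono (f : α → Option α) {m : ℕ} {v : α}
    (h : iterOpt f m v = none) {n : ℕ} (hmn : m ≤ n) : iterOpt f n v = none := by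
  obtain ⟨d, rfl⟩ := Nat.exists_eq_add_of_le hmn
  rw [iterOpt_add, h]
  rfl

lemma iterOpt_periodic_no_none (f : α → Option α) {p : ℕ} {v : α}
    (hp : 0 < p) (h : iterOpt f p v = some v) (m : ℕ) : iterOpt f m v ≠ none := by
  have key : ∀ q, iterOpt f (q * p) v = some v := by
    intro q
    induction q with
    | zero => rw [Nat.zero_mul]; rfl
    | succ q ih =>
      have : (q + 1) * p = q * p + p := by ring
      rw [this, iterOpt_add, ih]
      simpa using h
  intro hnone
  have hle : m ≤ m * p := Nat.le_mul_of_pos_right m hp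
  have := iterOpt_none_mono f hnone hle
  rw [key m] at this
  exact (Option.some_ne_none v) this

end IterOpt
section Aux3

variable {V : Type*} [Fintype V] [DecidableEq V] [Nonempty V]

lemma hsum_pair_mul (y₁ y₂ : HSt V) (f : HSt V → ℝ) :
    ∑ s', ((if s' = y₁ then (1:ℝ)/2 else 0) + (if s' = y₂ then (1:ℝ)/2 else 0)) * f s'
      = 1/2 * f y₁ + 1/2 * f y₂ := by
  simp [add_mul, ite_mul, Finset.sum_add_distrib]

lemma hsum_single_mul (y : HSt V) (f : HSt V → ℝ) :
    ∑ s', (if s' = y then (1:ℝ) else 0) * f s' = f y := by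
  simp [ite_mul]

variable (E : Set (V × V)) (vinit : V) {M : MDP (HSt V) (HAct V)}

lemma en_inr_none (hM : M.P = hamP E vinit) (z : Fin (Fintype.card V) ⊕ Fin 3) :
    M.enabled (Sum.inr z) none := by
  show (∑ s', M.P (Sum.inr z) none s') = 1
  rw [hM]
  rcases z with i | e
  · by_cases h : (i:ℕ) + 1 < Fintype.card V <;>
      simp [hamP, h, Finset.sum_add_distrib] <;> norm_num
  · simp [hamP]

lemma not_en_inr_some (hM : M.P = hamP E vinit) (z : Fin (Fintype.card V) ⊕ Fin 3)
    (e : V × V) : ¬ M.enabled (Sum.inr z) (some e) := by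
  show ¬ (∑ s', M.P (Sum.inr z) (some e) s') = 1
  rw [hM]
  rcases z with i | e' <;> simp [hamP]

lemma en_inl_none (hM : M.P = hamP E vinit) (v : V) :
    M.enabled (Sum.inl v) none := by
  show (∑ s', M.P (Sum.inl v) none s') = 1
  rw [hM]
  simp [hamP]

lemma en_inl_some_iff (hM : M.P = hamP E vinit) (v u u' : V) :
    M.enabled (Sum.inl v) (some (u, u')) ↔ (u = v ∧ (u, u') ∈ E) := by
  show (∑ s', M.P (Sum.inl v) (some (u, u')) s') = 1 ↔ _
  rw [hM]
  by_cases h : u = v ∧ (u, u') ∈ E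
  · refine iff_of_true ?_ h
    simp only [hamP, if_pos h]
    rw [Finset.sum_add_distrib]
    simp
    norm_num
  · simp [hamP, h]

lemma chosen_inr (hM : M.P = hamP E vinit) (σ : Scheduler M) (hdet : σ.Deterministic)
    (z : Fin (Fintype.card V) ⊕ Fin 3) : chosen σ (Sum.inr z : HSt V) = none := by
  cases hc : chosen σ (Sum.inr z : HSt V) with
  | none => rfl
  | some e =>
    have := chosen_enabled σ hdet (Sum.inr z : HSt V)
    rw [hc] at this
    exact absurd this (not_en_inr_some E vinit hM z e)

variable (σ : Scheduler M) (T : Set (HSt V))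

lemma val_inT (s : HSt V) (hT : s ∈ T) : ∀ n, reachN M σ T n (s, []) = 1 := by
  intro n
  cases n <;> · rw [reachN]; simp [hT]

lemma step_chain (hM : M.P = hamP E vinit) (hσ : σ.MD) (i : Fin (Fintype.card V))
    (hT : (Sum.inr (Sum.inl i) : HSt V) ∉ T) (n : ℕ) :
    reachN M σ T (n+1) ((Sum.inr (Sum.inl i) : HSt V), []) =
      1/2 * reachN M σ T n ((if (i:ℕ) = 0 then Sum.inl vinit else hsBot V), []) +
      1/2 * reachN M σ T n ((if h : (i:ℕ)+1 < Fintype.card V then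
          (Sum.inr (Sum.inl ⟨(i:ℕ)+1, h⟩) : HSt V) else hsB V), []) := by
  rw [val_succ M σ hσ.1 T, if_neg hT,
    sum_choice_mul σ hσ.2 _ (fun a => ∑ s', M.P (Sum.inr (Sum.inl i)) a s' *
      reachN M σ T n (s', [])),
    chosen_inr E vinit hM σ hσ.2, hM]
  by_cases h : (i:ℕ) + 1 < Fintype.card V
  · simp only [hamP, dif_pos h]
    rw [hsum_pair_mul]
  · simp only [hamP, dif_neg h]
    rw [hsum_pair_mul]

lemma val_absorb (hM : M.P = hamP E vinit) (hσ : σ.MD) (e : Fin 3)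
    (hT : (Sum.inr (Sum.inr e) : HSt V) ∉ T) :
    ∀ n, reachN M σ T n ((Sum.inr (Sum.inr e) : HSt V), []) = 0 := by
  intro n
  induction n with
  | zero => rw [reachN]; simp [hT]
  | succ n ih =>
    rw [val_succ M σ hσ.1 T, if_neg hT,
      sum_choice_mul σ hσ.2 _ (fun a => ∑ s', M.P (Sum.inr (Sum.inr e)) a s' *
        reachN M σ T n (s', [])),
      chosen_inr E vinit hM σ hσ.2, hM]
    simp only [hamP]
    rw [hsum_single_mul]
    exact ih

lemma step_inl_tau (hM : M.P = hamP E vinit) (hσ : σ.MD) (v : V)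
    (hc : chosen σ (Sum.inl v : HSt V) = none) (hT : (Sum.inl v : HSt V) ∉ T) (n : ℕ) :
    reachN M σ T (n+1) ((Sum.inl v : HSt V), []) = reachN M σ T n (hsA V, []) := by
  rw [val_succ M σ hσ.1 T, if_neg hT,
    sum_choice_mul σ hσ.2 _ (fun a => ∑ s', M.P (Sum.inl v) a s' *
      reachN M σ T n (s', [])),
    hc, hM]
  simp only [hamP]
  rw [hsum_single_mul]

lemma step_inl_edge (hM : M.P = hamP E vinit) (hσ : σ.MD) {v u u' : V}
    (hc : chosen σ (Sum.inl v : HSt V) = some (u, u')) (hT : (Sum.inl v : HSt V) ∉ T) (n : ℕ) :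
    u = v ∧ (u, u') ∈ E ∧
    reachN M σ T (n+1) ((Sum.inl v : HSt V), []) =
      1/2 * reachN M σ T n ((Sum.inl u' : HSt V), []) +
      1/2 * reachN M σ T n (hsBot V, []) := by
  have hen := chosen_enabled σ hσ.2 (Sum.inl v : HSt V)
  rw [hc] at hen
  have hE := (en_inl_some_iff E vinit hM v u u').1 hen
  refine ⟨hE.1, hE.2, ?_⟩
  rw [val_succ M σ hσ.1 T, if_neg hT,
    sum_choice_mul σ hσ.2 _ (fun a => ∑ s', M.P (Sum.inl v) a s' *
      reachN M σ T n (s', [])),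
    hc, hM]
  simp only [hamP, if_pos hE]
  rw [hsum_pair_mul]

lemma val_absorb_bot (hM : M.P = hamP E vinit) (hσ : σ.MD)
    (hT : hsBot V ∉ T) : ∀ n, reachN M σ T n (hsBot V, []) = 0 :=
  fun n => val_absorb E vinit σ T hM hσ 0 hT n

lemma val_absorb_A (hM : M.P = hamP E vinit) (hσ : σ.MD)
    (hT : hsA V ∉ T) : ∀ n, reachN M σ T n (hsA V, []) = 0 :=
  fun n => val_absorb E vinit σ T hM hσ 1 hT n

lemma val_absorb_B (hM : M.P = hamP E vinit) (hσ : σ.MD)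
    (hT : hsB V ∉ T) : ∀ n, reachN M σ T n (hsB V, []) = 0 :=
  fun n => val_absorb E vinit σ T hM hσ 2 hT n

end Aux3
section Aux4

variable {V : Type*} [Fintype V] [DecidableEq V] [Nonempty V]
variable (E : Set (V × V)) (vinit : V) {M : MDP (HSt V) (HAct V)}
variable (σ : Scheduler M)

lemma valb (hM : M.P = hamP E vinit) (hσ : σ.MD) : ∀ n : ℕ,
    (∀ v : V, reachN M σ {hsB V} n ((Sum.inl v : HSt V), []) = 0) ∧
    (∀ i : Fin (Fintype.card V), reachN M σ {hsB V} n ((Sum.inr (Sum.inl i) : HSt V), []) =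
      if Fintype.card V - (i:ℕ) ≤ n then (1/2:ℝ)^(Fintype.card V - (i:ℕ)) else 0) := by
  have hBotT : (hsBot V) ∉ ({hsB V} : Set (HSt V)) := by simp [hsBot, hsB]
  have hAT : (hsA V) ∉ ({hsB V} : Set (HSt V)) := by simp [hsA, hsB]
  intro n
  induction n with
  | zero =>
    refine ⟨fun v => ?_, fun i => ?_⟩
    · rw [reachN, if_neg (by simp [hsB])]
    · have hi := i.isLt
      rw [reachN, if_neg (by simp [hsB]), if_neg (by omega)]
  | succ n ih =>
    refine ⟨fun v => ?_, fun i => ?_⟩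
    · rcases hca : chosen σ (Sum.inl v : HSt V) with _ | ⟨u, u'⟩
      · rw [step_inl_tau E vinit σ _ hM hσ v hca (by simp [hsB])]
        exact val_absorb_A E vinit σ {hsB V} hM hσ hAT n
      · obtain ⟨hu, hEdge, hstep⟩ := step_inl_edge E vinit σ {hsB V} hM hσ hca (by simp [hsB]) n
        rw [hstep, ih.1 u', val_absorb_bot E vinit σ {hsB V} hM hσ hBotT n]
        ring
    · rw [step_chain E vinit σ _ hM hσ i (by simp [hsB]) n]
      have h1 : reachN M σ {hsB V} n
          ((if (i:ℕ) = 0 then (Sum.inl vinit : HSt V) else hsBot V), []) = 0 := by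
        split
        · exact ih.1 vinit
        · exact val_absorb_bot E vinit σ {hsB V} hM hσ hBotT n
      rw [h1]
      have hi := i.isLt
      by_cases h : (i:ℕ) + 1 < Fintype.card V
      · rw [dif_pos h, ih.2 ⟨(i:ℕ)+1, h⟩]
        simp only [Fin.val_mk]
        have hci : Fintype.card V - (i:ℕ) = (Fintype.card V - ((i:ℕ)+1)) + 1 := by omega
        by_cases h2 : Fintype.card V - ((i:ℕ)+1) ≤ n
        · rw [if_pos h2, if_pos (by omega), hci, pow_succ]; ring
        · rw [if_neg h2, if_neg (by omega)]; ring
      · rw [dif_neg h, val_inT σ {hsB V} (hsB V) rfl n]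
        rw [if_pos (by omega)]
        have hone : Fintype.card V - (i:ℕ) = 1 := by omega
        rw [hone]; norm_num

lemma Pr_eq_b (hM : M.P = hamP E vinit) (hσ : σ.MD) :
    Pr M σ (hs0 V) {hsB V} = (1/2:ℝ)^(Fintype.card V) := by
  have hv : ∀ n, reachN M σ {hsB V} n (hs0 V, []) =
      if Fintype.card V ≤ n then (1/2:ℝ)^(Fintype.card V) else 0 := by
    intro n
    have := (valb E vinit σ hM hσ n).2 ⟨0, Fintype.card_pos⟩
    simpa [hs0] using this
  unfold Pr
  refine iSup_eq_of_forall_le_of_eq (fun n => ?_) (n₀ := Fintype.card V) ?_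
  · rw [hv n]
    split
    · exact le_refl _
    · positivity
  · rw [hv (Fintype.card V), if_pos le_rfl]

/-- the partial successor function induced by a deterministic scheduler -/
noncomputable def nxtOf (σ : Scheduler M) : V → Option V :=
  fun v => Option.map Prod.snd (chosen σ (Sum.inl v : HSt V))

lemma chosen_of_nxt_some (hM : M.P = hamP E vinit) (hσ : σ.MD) {v v₁ : V}
    (hnv : nxtOf σ v = some v₁) :
    chosen σ (Sum.inl v : HSt V) = some (v, v₁) ∧ (v, v₁) ∈ E := by
  rcases hco : chosen σ (Sum.inl v : HSt V) with _ | ⟨u, u'⟩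
  · rw [nxtOf, hco] at hnv; simp at hnv
  · rw [nxtOf, hco] at hnv
    simp only [Option.map_some, Option.some.injEq] at hnv
    have hen := chosen_enabled σ hσ.2 (Sum.inl v : HSt V)
    rw [hco] at hen
    obtain ⟨hu, hE⟩ := (en_inl_some_iff E vinit hM v u u').1 hen
    subst hu
    subst hnv
    exact ⟨rfl, hE⟩

lemma vala_chain_pos (hM : M.P = hamP E vinit) (hσ : σ.MD) :
    ∀ (n : ℕ) (i : Fin (Fintype.card V)), 1 ≤ (i:ℕ) →
      reachN M σ {hsA V} n ((Sum.inr (Sum.inl i) : HSt V), []) = 0 := by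
  intro n
  induction n with
  | zero =>
    intro i _
    rw [reachN, if_neg (by simp [hsA])]
  | succ n ih =>
    intro i hi1
    rw [step_chain E vinit σ _ hM hσ i (by simp [hsA]) n]
    have h1 : reachN M σ {hsA V} n
        ((if (i:ℕ) = 0 then (Sum.inl vinit : HSt V) else hsBot V), []) = 0 := by
      rw [if_neg (by omega)]
      exact val_absorb_bot E vinit σ {hsA V} hM hσ (by simp [hsBot, hsA]) n
    rw [h1]
    by_cases h : (i:ℕ) + 1 < Fintype.card V
    · rw [dif_pos h, ih ⟨(i:ℕ)+1, h⟩ (by exact Nat.le_add_left 1 ↑i)]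
      ring
    · rw [dif_neg h, val_absorb_B E vinit σ {hsA V} hM hσ (by simp [hsB, hsA]) n]
      ring

end Aux4
section Aux5

variable {V : Type*} [Fintype V] [DecidableEq V] [Nonempty V]
variable (E : Set (V × V)) (vinit : V) {M : MDP (HSt V) (HAct V)}
variable (σ : Scheduler M)

lemma vala_stops (hM : M.P = hamP E vinit) (hσ : σ.MD) :
    ∀ (k : ℕ) (v w : V), iterOpt (nxtOf σ) k v = some w → nxtOf σ w = none →
    ∀ n, reachN M σ {hsA V} n ((Sum.inl v : HSt V), []) =
      if k + 1 ≤ n then (1/2:ℝ)^k else 0 := by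
  intro k
  induction k with
  | zero =>
    intro v w hit hw n
    have hvw : v = w := by simpa [iterOpt] using hit
    subst hvw
    have hc : chosen σ (Sum.inl v : HSt V) = none := by
      rcases hco : chosen σ (Sum.inl v : HSt V) with _ | ⟨u, u'⟩
      · rfl
      · rw [nxtOf, hco] at hw; simp at hw
    cases n with
    | zero => rw [reachN, if_neg (by simp [hsA]), if_neg (by omega)]
    | succ n =>
      rw [step_inl_tau E vinit σ {hsA V} hM hσ v hc (by simp [hsA]),
        val_inT σ {hsA V} (hsA V) rfl n, if_pos (by omega)]
      norm_num
  | succ k ih =>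
    intro v w hit hw n
    rw [iterOpt_succ_left] at hit
    rcases hnv : nxtOf σ v with _ | v₁
    · rw [hnv] at hit; simp at hit
    · rw [hnv] at hit
      have hit' : iterOpt (nxtOf σ) k v₁ = some w := hit
      obtain ⟨hc, hE⟩ := chosen_of_nxt_some E vinit σ hM hσ hnv
      cases n with
      | zero => rw [reachN, if_neg (by simp [hsA]), if_neg (by omega)]
      | succ n =>
        obtain ⟨hu, hE', hstep⟩ :=
          step_inl_edge E vinit σ {hsA V} hM hσ hc (by simp [hsA]) n
        rw [hstep, ih v₁ w hit' hw n,
          val_absorb_bot E vinit σ {hsA V} hM hσ (by simp [hsBot, hsA]) n]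
        by_cases h2 : k + 1 ≤ n
        · rw [if_pos h2, if_pos (by omega), pow_succ]; ring
        · rw [if_neg h2, if_neg (by omega)]; ring

lemma vala_nostop (hM : M.P = hamP E vinit) (hσ : σ.MD) :
    ∀ (n : ℕ) (v : V), (∀ m, iterOpt (nxtOf σ) m v ≠ none) →
    reachN M σ {hsA V} n ((Sum.inl v : HSt V), []) = 0 := by
  intro n
  induction n with
  | zero => intro v _; rw [reachN, if_neg (by simp [hsA])]
  | succ n ih =>
    intro v hv
    rcases hnv : nxtOf σ v with _ | v₁
    · refine absurd ?_ (hv 1)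
      show (iterOpt (nxtOf σ) 0 v).bind (nxtOf σ) = none
      rw [show iterOpt (nxtOf σ) 0 v = some v from rfl]
      simpa using hnv
    · obtain ⟨hc, hE⟩ := chosen_of_nxt_some E vinit σ hM hσ hnv
      obtain ⟨hu, hE', hstep⟩ :=
        step_inl_edge E vinit σ {hsA V} hM hσ hc (by simp [hsA]) n
      have hv₁ : ∀ m, iterOpt (nxtOf σ) m v₁ ≠ none := by
        intro m
        have := hv (m + 1)
        rw [iterOpt_succ_left, hnv] at this
        exact this
      rw [hstep, ih v₁ hv₁,
        val_absorb_bot E vinit σ {hsA V} hM hσ (by simp [hsBot, hsA]) n]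
      norm_num

lemma vala_s0 (hM : M.P = hamP E vinit) (hσ : σ.MD) (n : ℕ) :
    reachN M σ {hsA V} (n+1) (hs0 V, []) =
      1/2 * reachN M σ {hsA V} n ((Sum.inl vinit : HSt V), []) := by
  rw [show (hs0 V) = (Sum.inr (Sum.inl ⟨0, Fintype.card_pos⟩) : HSt V) from rfl,
    step_chain E vinit σ {hsA V} hM hσ ⟨0, Fintype.card_pos⟩ (by simp [hsA]) n]
  have h2 : reachN M σ {hsA V} n
      ((if h : ((⟨0, Fintype.card_pos⟩ : Fin (Fintype.card V)) : ℕ) + 1 < Fintype.card V then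
          (Sum.inr (Sum.inl ⟨((⟨0, Fintype.card_pos⟩ : Fin (Fintype.card V)) : ℕ) + 1, h⟩) : HSt V)
        else hsB V), []) = 0 := by
    split
    · exact vala_chain_pos E vinit σ hM hσ n _ (by exact Nat.le_add_left 1 _)
    · exact val_absorb_B E vinit σ {hsA V} hM hσ (by simp [hsB, hsA]) n
  rw [h2, if_pos rfl]
  ring

lemma Pr_a_stops (hM : M.P = hamP E vinit) (hσ : σ.MD) (k : ℕ) (w : V)
    (hit : iterOpt (nxtOf σ) k vinit = some w) (hw : nxtOf σ w = none) :
    Pr M σ (hs0 V) {hsA V} = (1/2:ℝ)^(k+1) := by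
  have hval : ∀ n, reachN M σ {hsA V} n (hs0 V, []) =
      if k + 2 ≤ n then (1/2:ℝ)^(k+1) else 0 := by
    intro n
    cases n with
    | zero => rw [reachN, if_neg (by simp [hs0, hsA]), if_neg (by omega)]
    | succ n =>
      rw [vala_s0 E vinit σ hM hσ n, vala_stops E vinit σ hM hσ k vinit w hit hw n]
      by_cases h2 : k + 1 ≤ n
      · rw [if_pos h2, if_pos (by omega), pow_succ]; ring
      · rw [if_neg h2, if_neg (by omega)]; ring
  unfold Pr
  refine iSup_eq_of_forall_le_of_eq (fun n => ?_) (n₀ := k + 2) ?_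
  · rw [hval n]
    split
    · exact le_refl _
    · positivity
  · rw [hval (k + 2), if_pos le_rfl]

lemma Pr_a_nostop (hM : M.P = hamP E vinit) (hσ : σ.MD)
    (hv : ∀ m, iterOpt (nxtOf σ) m vinit ≠ none) :
    Pr M σ (hs0 V) {hsA V} = 0 := by
  have hval : ∀ n, reachN M σ {hsA V} n (hs0 V, []) = 0 := by
    intro n
    cases n with
    | zero => rw [reachN, if_neg (by simp [hs0, hsA])]
    | succ n =>
      rw [vala_s0 E vinit σ hM hσ n, vala_nostop E vinit σ hM hσ n vinit hv]
      norm_num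
  unfold Pr
  refine iSup_eq_of_forall_le_of_eq (fun n => le_of_eq (hval n)) (n₀ := 0) (hval 0)

end Aux5
/-- For every `0 ≤ ε < 1/2^{|V|+1}`: `G` has a Hamiltonian path starting
at `vinit` iff some memoryless deterministic scheduler `σ` of the reduction MDP satisfies
`|Pr^σ_{s₀}(◇{s_a}) − Pr^σ_{s₀}(◇{s_b})| ≤ ε`. -/
theorem hamiltonian_iff_MD_approx_equal
    {V : Type*} [Fintype V] [DecidableEq V] [Nonempty V]
    (E : Set (V × V)) (vinit : V)
    (M : MDP (HSt V) (HAct V)) (hM : M.P = hamP E vinit)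
    (ε : ℝ) (hε0 : 0 ≤ ε) (hε : ε < 1 / 2 ^ (Fintype.card V + 1)) :
    (∃ l : List V, IsHamPath E vinit l) ↔
      ∃ σ : Scheduler M, σ.MD ∧
        |Pr M σ (hs0 V) ({hsA V} : Set (HSt V)) -
          Pr M σ (hs0 V) ({hsB V} : Set (HSt V))| ≤ ε := by
  have hcpos : 0 < Fintype.card V := Fintype.card_pos
  have hhalfpow : ∀ m : ℕ, (1/2:ℝ)^m = 1 / 2^m := fun m => one_div_pow 2 m
  constructor
  · -- forward: Hamiltonian path gives a scheduler with equal probabilities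
    rintro ⟨l, hnd, hlen, hhead, hchain⟩
    -- the deterministic action choice
    set D : HSt V → HAct V := fun s =>
      match s with
      | Sum.inl v =>
          if h : l.idxOf v + 1 < l.length then some (v, l.get ⟨l.idxOf v + 1, h⟩)
          else none
      | Sum.inr _ => none with hD
    have hmem : ∀ v : V, v ∈ l := by
      intro v
      have h1 : l.toFinset = Finset.univ := by
        apply Finset.eq_univ_of_card
        rw [List.toFinset_card_of_nodup hnd, hlen, Fintype.card]
      have := Finset.mem_univ v
      rw [← h1, List.mem_toFinset] at this
      exact this
    have hDen : ∀ s : HSt V, M.enabled s (D s) := by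
      intro s
      match s with
      | Sum.inr z => exact en_inr_none E vinit hM z
      | Sum.inl v =>
        simp only [hD]
        split
        · next h =>
          rw [en_inl_some_iff E vinit hM]
          refine ⟨rfl, ?_⟩
          have hvl : l.idxOf v < l.length := by omega
          have hv : l.get ⟨l.idxOf v, hvl⟩ = v := List.idxOf_get hvl
          have := List.isChain_iff_getElem.1 hchain (l.idxOf v) (by omega)
          simp only [List.get_eq_getElem] at hv
          rwa [hv] at this
        · exact en_inl_none E vinit hM v
    set σ : Scheduler M :=
      { choice := fun π a => if a = D (Hist.last π) then 1 else 0
        nonneg := by intro π a; split <;> norm_num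
        sum_one := by intro π; simp
        supp := by
          intro π a ha
          rw [if_neg]
          intro h
          rw [h] at ha
          exact ha (hDen (Hist.last π)) } with hσdef
    have hMD : σ.MD := by
      constructor
      · intro π π' h
        funext a
        show (if a = D (Hist.last π) then (1:ℝ) else 0) =
          (if a = D (Hist.last π') then (1:ℝ) else 0)
        rw [h]
      · intro π a
        by_cases h : a = D (Hist.last π)
        · right
          show (if a = D (Hist.last π) then (1:ℝ) else 0) = 1
          rw [if_pos h]
        · left
          show (if a = D (Hist.last π) then (1:ℝ) else 0) = 0
          rw [if_neg h]
    have hchosen : ∀ v : V, chosen σ (Sum.inl v : HSt V) = D (Sum.inl v) := by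
      intro v
      apply chosen_eq_of_choice_one σ hMD.2
      show (if D (Sum.inl v) = D (Hist.last ((Sum.inl v : HSt V), ([] : List (HAct V × HSt V)))) then (1:ℝ) else 0) = 1
      have hlast : Hist.last ((Sum.inl v : HSt V), ([] : List (HAct V × HSt V))) = Sum.inl v := rfl
      rw [hlast, if_pos rfl]
    have hnxt : ∀ v : V, nxtOf σ v =
        if h : l.idxOf v + 1 < l.length then some (l.get ⟨l.idxOf v + 1, h⟩) else none := by
      intro v
      rw [nxtOf, hchosen v]
      simp only [hD]
      split
      · rfl
      · rfl
    have hiter : ∀ j, (hj : j < l.length) →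
        iterOpt (nxtOf σ) j vinit = some (l.get ⟨j, hj⟩) := by
      intro j
      induction j with
      | zero =>
        intro hj
        have h0 : l.get ⟨0, hj⟩ = vinit := by
          have h1 : l[0]? = some (l.get ⟨0, hj⟩) := List.getElem?_eq_getElem hj
          rw [← List.head?_eq_getElem?, hhead] at h1
          exact (Option.some.injEq _ _ ▸ h1.symm : _)
        rw [h0]
        rfl
      | succ j ih =>
        intro hj
        have hj' : j < l.length := by omega
        have : iterOpt (nxtOf σ) (j+1) vinit =
            (iterOpt (nxtOf σ) j vinit).bind (nxtOf σ) := rfl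
        rw [this, ih hj']
        show nxtOf σ (l.get ⟨j, hj'⟩) = _
        rw [hnxt]
        have hidx : l.idxOf (l.get ⟨j, hj'⟩) = j := by simpa using List.Nodup.idxOf_getElem hnd j hj'
        rw [dif_pos (by rw [hidx]; exact hj)]
        congr 1
        congr 1
        exact Fin.ext (by simp [hidx, List.Nodup.idxOf_getElem hnd j hj'])
    have hstop : nxtOf σ (l.get ⟨l.length - 1, by omega⟩) = none := by
      rw [hnxt]
      have hidx : l.idxOf (l.get ⟨l.length - 1, by omega⟩) = l.length - 1 := by
        simpa using List.Nodup.idxOf_getElem hnd (l.length - 1) (by omega)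
      rw [dif_neg (by rw [hidx]; omega)]
    have hl1 : 0 < l.length := by omega
    have hPa : Pr M σ (hs0 V) {hsA V} = (1/2:ℝ)^(l.length - 1 + 1) :=
      Pr_a_stops E vinit σ hM hMD (l.length - 1) _
        (hiter (l.length - 1) (by omega)) hstop
    have hPb : Pr M σ (hs0 V) {hsB V} = (1/2:ℝ)^(Fintype.card V) :=
      Pr_eq_b E vinit σ hM hMD
    refine ⟨σ, hMD, ?_⟩
    rw [hPa, hPb, show l.length - 1 + 1 = Fintype.card V by omega]
    simpa using hε0
  · -- backward
    rintro ⟨σ, hMD, hdiff⟩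
    have hPb : Pr M σ (hs0 V) {hsB V} = (1/2:ℝ)^(Fintype.card V) :=
      Pr_eq_b E vinit σ hM hMD
    have hpow2 : (0:ℝ) < 2 ^ Fintype.card V := by positivity
    have hlt : (1:ℝ) / 2 ^ (Fintype.card V + 1) < (1/2:ℝ)^(Fintype.card V) := by
      rw [hhalfpow]
      rw [pow_succ]
      rw [div_lt_div_iff₀ (by positivity) hpow2]
      nlinarith
    by_cases hns : ∃ m, iterOpt (nxtOf σ) m vinit = none
    · -- the trajectory stops: extract the path
      classical
      let m₀ := Nat.find hns
      have hm₀ : iterOpt (nxtOf σ) m₀ vinit = none := Nat.find_spec hns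
      have hmin : ∀ j < m₀, iterOpt (nxtOf σ) j vinit ≠ none :=
        fun j hj => Nat.find_min hns hj
      have hm₀pos : 0 < m₀ := by
        rcases Nat.eq_zero_or_pos m₀ with h | h
        · rw [h] at hm₀; exact absurd hm₀ (by simp [iterOpt])
        · exact h
      set k := m₀ - 1 with hk
      have hksome : ∀ j ≤ k, ∃ u, iterOpt (nxtOf σ) j vinit = some u := by
        intro j hj
        exact Option.ne_none_iff_exists'.1 (hmin j (by omega))
      obtain ⟨w, hw⟩ := hksome k le_rfl
      have hwn : nxtOf σ w = none := by
        have h1 : iterOpt (nxtOf σ) (k+1) vinit = none := by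
          rw [show k + 1 = m₀ by omega]; exact hm₀
        have h2 : (iterOpt (nxtOf σ) k vinit).bind (nxtOf σ) = none := h1
        rw [hw] at h2
        exact h2
      have hPa : Pr M σ (hs0 V) {hsA V} = (1/2:ℝ)^(k+1) :=
        Pr_a_stops E vinit σ hM hMD k w hw hwn
      -- the visited vertices
      set t : ℕ → V := fun j => (iterOpt (nxtOf σ) j vinit).getD w with ht
      have htj : ∀ j ≤ k, iterOpt (nxtOf σ) j vinit = some (t j) := by
        intro j hj
        obtain ⟨u, hu⟩ := hksome j hj
        rw [ht]
        simp only [hu]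
        rfl
      have hinj : ∀ i j, i < j → j ≤ k → t i ≠ t j := by
        intro i j hij hjk heq
        have hti := htj i (by omega)
        have htjj := htj j hjk
        have h1 : iterOpt (nxtOf σ) (j - i) (t i) = some (t j) := by
          have h5 := iterOpt_add (nxtOf σ) i (j - i) vinit
          rw [show i + (j - i) = j by omega, hti, htjj] at h5
          exact h5.symm
        rw [← heq] at h1
        have hper := iterOpt_periodic_no_none (nxtOf σ) (p := j - i) (by omega) h1
        apply hper (k + 1 - i)
        have := iterOpt_add (nxtOf σ) i (k + 1 - i) vinit
        rw [show i + (k + 1 - i) = k + 1 by omega, hti] at this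
        have h3 : iterOpt (nxtOf σ) (k+1) vinit = none := by
          rw [show k + 1 = m₀ by omega]; exact hm₀
        rw [h3] at this
        exact this.symm
      set L : List V := (List.range (k+1)).map t with hL
      have hLnd : L.Nodup := by
        refine List.Nodup.map_on ?_ List.nodup_range
        intro i hi j hj hijeq
        rw [List.mem_range] at hi hj
        by_contra hne
        rcases Nat.lt_or_ge i j with h | h
        · exact hinj i j h (by omega) hijeq
        · have : j < i := by omega
          exact hinj j i this (by omega) hijeq.symm
      have hLlen : L.length = k + 1 := by simp [hL]
      have hkle : k + 1 ≤ Fintype.card V := by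
        have := hLnd.length_le_card
        omega
      have hkeq : k + 1 = Fintype.card V := by
        by_contra hne
        have hklt : k + 1 < Fintype.card V := by omega
        have h2 : (1/2:ℝ)^(Fintype.card V - 1) ≤ (1/2:ℝ)^(k+1) :=
          pow_le_pow_of_le_one (by norm_num) (by norm_num) (by omega)
        have h3 : (1/2:ℝ)^(Fintype.card V) = (1/2:ℝ)^(Fintype.card V - 1) * (1/2) := by
          rw [← pow_succ, show Fintype.card V - 1 + 1 = Fintype.card V by omega]
        have h6 := hhalfpow (Fintype.card V)
        rw [hPa, hPb] at hdiff
        have h4 := (abs_le.1 hdiff).2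
        linarith
      refine ⟨L, hLnd, by omega, ?_, ?_⟩
      · -- head
        have h0 := htj 0 (by omega)
        have hz : iterOpt (nxtOf σ) 0 vinit = some vinit := rfl
        rw [hz] at h0
        have hv0 : t 0 = vinit := (Option.some_inj.1 h0).symm
        rw [hL, List.range_succ_eq_map]
        show some (t 0) = some vinit
        rw [hv0]
      · -- chain
        unfold List.Chain'
        rw [hL, List.isChain_map, List.isChain_range_succ]
        intro m hm
        have h1 := htj m (by omega)
        have h2 := htj (m+1) (by omega)
        have h3 : (iterOpt (nxtOf σ) m vinit).bind (nxtOf σ) = some (t (m+1)) := h2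
        rw [h1] at h3
        have h4 : nxtOf σ (t m) = some (t (m+1)) := h3
        exact (chosen_of_nxt_some E vinit σ hM hMD h4).2
    · -- trajectory never stops: contradiction with closeness
      push_neg at hns
      exfalso
      have hPa : Pr M σ (hs0 V) {hsA V} = 0 :=
        Pr_a_nostop E vinit σ hM hMD hns
      rw [hPa, hPb] at hdiff
      have h4 := (abs_le.1 hdiff).1
      have : (1/2:ℝ)^(Fintype.card V) ≤ ε := by linarith
      linarith
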